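/- arXiv:1602.03963 — 2 statements merged into one kernel-verified Lean document; each statement's English description precedes it below -/
import Mathlib

section
/- Assume the interaction graph G = (V, I) is acyclic, and let {{i_1,i_2},{i_2,i_3},…,{i_m,i_{m+1}}} be a path of length m ≥ 2 in G (so all edges {i_s,i_{s+1}} belong to I and the vertices i_1,…,i_{m+1} are distinct). Then w_{{i_1,i_{m+1}}} < w_{{i_s,i_{s+1}}} for every s ∈ {1,…,m}. -/
open Finset

/-- The sigmoid function `σ(t) = eᵗ/(1+eᵗ)`. -/
noncomputable def sigmoid (t : ℝ) : ℝ := Real.exp t / (1 + Real.exp t)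

/-- Interpretation of a Boolean as `±1 ∈ ℝ`. -/
def pm (b : Bool) : ℝ := if b then 1 else -1

/-- `Σ_{{i,j}∈E} β_{{i,j}} x_i x_j`, summed over unordered pairs of distinct indices. -/
noncomputable def fld (d : ℕ) (β : Fin d → Fin d → ℝ) (x : Fin d → Bool) : ℝ :=
  ∑ i : Fin d, ∑ j ∈ Finset.Ioi i, β i j * pm (x i) * pm (x j)

/-- `Pr(y = s·(+1) | x_V ∈ A)`.  Since the covariates are i.i.d. uniform on `{−1,+1}`
and `Pr(y = s | x_V = x) = σ(s · Σ β x_i x_j)`, this conditional probability equals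
`(Σ_{x∈A} σ(s · fld x)) / |A|`. -/
noncomputable def condProbY (d : ℕ) (β : Fin d → Fin d → ℝ) (s : ℝ)
    (A : Finset (Fin d → Bool)) : ℝ :=
  (∑ x ∈ A, sigmoid (s * fld d β x)) / A.card

open scoped Classical in
/-- The influence `w_e = |2·Pr(y = +1 | x_i = +1, x_j = +1) − 1|` for `e = {i,j}`. -/
noncomputable def wgt (d : ℕ) (β : Fin d → Fin d → ℝ) (e : Sym2 (Fin d)) : ℝ :=
  |2 * condProbY d β 1 (Finset.univ.filter (fun x => ∀ v ∈ e, x v = true)) - 1|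

/-- The interaction graph `G = (V, I)` with `I = {{i,j} : β_{{i,j}} ≠ 0}`. -/
def interGraph (d : ℕ) (β : Fin d → Fin d → ℝ) : SimpleGraph (Fin d) :=
  SimpleGraph.fromRel (fun i j => β i j ≠ 0)

/-! ### Auxiliary definitions and lemmas -/

/-- sign of a flip bit: `ff ↦ 1`, `tt ↦ -1`. -/
def sg (b : Bool) : ℝ := if b then -1 else 1

lemma sg_xor (b c : Bool) : sg (xor b c) = sg b * sg c := by
  cases b <;> cases c <;> simp [sg]

lemma pm_xor (b c : Bool) : pm (xor b c) = sg b * pm c := by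
  cases b <;> cases c <;> simp [sg, pm]

lemma sg_inj : Function.Injective sg := by
  intro b c h; cases b <;> cases c <;> simp [sg] at h ⊢ <;> linarith

lemma sg_ne_eq (b c : Bool) (h : b ≠ c) : sg b * sg c = -1 := by
  cases b <;> cases c <;> simp [sg] at h ⊢

lemma sg_eq_eq (b c : Bool) (h : b = c) : sg b * sg c = 1 := by
  subst h; cases b <;> simp [sg]

lemma sg_mul_eq_one (b c : Bool) (h : sg b * sg c = 1) : b = c := by
  cases b <;> cases c <;> simp [sg] at h ⊢ <;> linarith

lemma pm_mul_pm_eq_one_iff (b c : Bool) : pm b * pm c = 1 ↔ b = c := by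
  cases b <;> cases c <;> simp [pm] <;> norm_num

lemma pm_eq_sg_xor (b c : Bool) : pm b * pm c = sg (xor b c) := by
  cases b <;> cases c <;> simp [pm, sg]

lemma sg_not (b : Bool) : sg (!b) = - sg b := by cases b <;> simp [sg]
lemma sg_sq (b : Bool) : sg b * sg b = 1 := by cases b <;> norm_num [sg]
lemma sg_vals (b : Bool) : sg b = 1 ∨ sg b = -1 := by cases b <;> simp [sg]

lemma prod_sg_vals {ι : Type*} (s : Finset ι) (g : ι → Bool) :
    (∏ i ∈ s, sg (g i)) = 1 ∨ (∏ i ∈ s, sg (g i)) = -1 := by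
  refine Finset.prod_induction _ (fun x => x = 1 ∨ x = -1) ?_ (Or.inl rfl)
    (fun i _ => sg_vals (g i))
  rintro a b (rfl | rfl) (rfl | rfl) <;> norm_num

/-- `θ(t) = 2σ(t) − 1`. -/
noncomputable def th (t : ℝ) : ℝ := 2 * sigmoid t - 1

lemma th_odd (t : ℝ) : th (-t) = - th t := by
  unfold th sigmoid
  rw [Real.exp_neg]
  have h1 := (Real.exp_pos t).ne'
  have h2 : (0:ℝ) < 1 + Real.exp t := by positivity
  field_simp
  ring

lemma th_strictMono : StrictMono th := by
  intro a b hab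
  unfold th sigmoid
  have ha : (0:ℝ) < 1 + Real.exp a := by positivity
  have hb : (0:ℝ) < 1 + Real.exp b := by positivity
  have : Real.exp a / (1 + Real.exp a) < Real.exp b / (1 + Real.exp b) := by
    rw [div_lt_div_iff₀ ha hb]
    nlinarith [Real.exp_lt_exp.2 hab, Real.exp_pos a, Real.exp_pos b]
  linarith

/-- flipping a configuration by a Boolean vector. -/
def flipBy (d : ℕ) (V : Fin d → Bool) (x : Fin d → Bool) : Fin d → Bool :=
  fun w => xor (V w) (x w)

lemma flipBy_flipBy (d : ℕ) (V x : Fin d → Bool) : flipBy d V (flipBy d V x) = x := by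
  funext w; simp [flipBy]

/-- sum over ordered pairs of an indicator of one unordered pair. -/
lemma pairsum {d : ℕ} (u v : Fin d) (huv : u < v) (r : ℝ) :
    ∑ i : Fin d, ∑ j ∈ Finset.Ioi i, (if s(i,j) = s(u,v) then r else 0) = r := by
  rw [Finset.sum_eq_single u]
  · rw [Finset.sum_eq_single v]
    · simp
    · intro j hj hjv
      rw [if_neg]
      rw [Sym2.eq_iff]
      rintro (⟨-, rfl⟩ | ⟨h1, rfl⟩)
      · exact hjv rfl
      · exact absurd h1 huv.ne
    · intro h
      exact absurd (Finset.mem_Ioi.2 huv) h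
  · intro i _ hiu
    apply Finset.sum_eq_zero
    intro j hj
    rw [if_neg]
    rw [Sym2.eq_iff]
    rintro (⟨h1, rfl⟩ | ⟨rfl, rfl⟩)
    · exact hiu h1
    · simp at hj; omega
  · simp

lemma path_edges_distinct {d m : ℕ} {p : Fin (m+1) → Fin d} (hinj : Function.Injective p)
    (s s' : Fin m) (h : s(p s.castSucc, p s.succ) = s(p s'.castSucc, p s'.succ)) : s = s' := by
  rw [Sym2.eq_iff] at h
  rcases h with ⟨h1, _⟩ | ⟨h1, h2⟩
  · have := hinj h1
    exact Fin.castSucc_injective _ this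
  · have e1 := congrArg Fin.val (hinj h1)
    have e2 := congrArg Fin.val (hinj h2)
    simp [Fin.val_succ] at e1 e2
    omega

lemma master {d m : ℕ} (β : Fin d → Fin d → ℝ) (hsymm : ∀ i j, β i j = β j i)
    (p : Fin (m+1) → Fin d) (hinj : Function.Injective p)
    (V : Fin d → Bool) (δ : ℝ)
    (hδ : ∀ i j : Fin d, i ≠ j → β i j ≠ 0 →
        (∀ s : Fin m, s(i,j) ≠ s(p s.castSucc, p s.succ)) → sg (V i) * sg (V j) = δ)
    (x : Fin d → Bool) :
    fld d β (flipBy d V x) = δ * fld d β x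
      + ∑ s : Fin m, (sg (V (p s.castSucc)) * sg (V (p s.succ)) - δ)
          * β (p s.castSucc) (p s.succ) * (pm (x (p s.castSucc)) * pm (x (p s.succ))) := by
  have expand : fld d β (flipBy d V x)
      = ∑ i : Fin d, ∑ j ∈ Finset.Ioi i,
          β i j * (sg (V i) * sg (V j)) * (pm (x i) * pm (x j)) := by
    unfold fld flipBy
    refine Finset.sum_congr rfl fun i _ => Finset.sum_congr rfl fun j _ => ?_
    rw [pm_xor, pm_xor]; ring
  have pointwise : ∀ i j : Fin d, i < j →
      β i j * (sg (V i) * sg (V j)) * (pm (x i) * pm (x j))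
        = δ * (β i j * pm (x i) * pm (x j))
          + ∑ s : Fin m, (if s(i,j) = s(p s.castSucc, p s.succ) then
              (sg (V (p s.castSucc)) * sg (V (p s.succ)) - δ)
                * β (p s.castSucc) (p s.succ)
                * (pm (x (p s.castSucc)) * pm (x (p s.succ))) else 0) := by
    intro i j hij
    by_cases hpath : ∃ s : Fin m, s(i,j) = s(p s.castSucc, p s.succ)
    · obtain ⟨s₀, hs₀⟩ := hpath
      rw [Finset.sum_eq_single s₀]
      · rw [if_pos hs₀]
        rw [Sym2.eq_iff] at hs₀
        rcases hs₀ with ⟨h1, h2⟩ | ⟨h1, h2⟩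
        · rw [← h1, ← h2]; ring
        · rw [← h1, ← h2, hsymm]; ring
      · intro s _ hs
        rw [if_neg]
        intro h
        exact hs (path_edges_distinct hinj s s₀ (h ▸ hs₀ ▸ rfl))
      · intro h; exact absurd (Finset.mem_univ s₀) h
    · push_neg at hpath
      rw [Finset.sum_eq_zero (fun s _ => if_neg (hpath s))]
      by_cases hβ : β i j = 0
      · rw [hβ]; ring
      · rw [hδ i j hij.ne hβ hpath]; ring
  rw [expand]
  have : ∀ i : Fin d, ∑ j ∈ Finset.Ioi i,
      β i j * (sg (V i) * sg (V j)) * (pm (x i) * pm (x j))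
      = ∑ j ∈ Finset.Ioi i, (δ * (β i j * pm (x i) * pm (x j))
          + ∑ s : Fin m, (if s(i,j) = s(p s.castSucc, p s.succ) then
              (sg (V (p s.castSucc)) * sg (V (p s.succ)) - δ)
                * β (p s.castSucc) (p s.succ)
                * (pm (x (p s.castSucc)) * pm (x (p s.succ))) else 0)) :=
    fun i => Finset.sum_congr rfl fun j hj => pointwise i j (Finset.mem_Ioi.1 hj)
  rw [Finset.sum_congr rfl fun i _ => this i]
  rw [Finset.sum_congr rfl fun i (_ : i ∈ univ) => Finset.sum_add_distrib]
  rw [Finset.sum_add_distrib]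
  congr 1
  · unfold fld
    rw [Finset.mul_sum]
    exact Finset.sum_congr rfl fun i _ => (Finset.mul_sum _ _ _).symm
  · rw [Finset.sum_congr rfl fun i (_ : i ∈ univ) => Finset.sum_comm]
    rw [Finset.sum_comm]
    refine Finset.sum_congr rfl fun s _ => ?_
    have hne : p s.castSucc ≠ p s.succ := by
      intro h
      have := hinj h
      exact absurd this (Fin.castSucc_lt_succ (i := s)).ne
    rcases lt_or_gt_of_ne hne with hlt | hgt
    · exact pairsum _ _ hlt _
    · have hsw : ∀ i j : Fin d, (s(i,j) = s(p s.castSucc, p s.succ))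
          = (s(i,j) = s(p s.succ, p s.castSucc)) := by
        intro i j
        exact propext ⟨fun h => h.trans Sym2.eq_swap, fun h => h.trans Sym2.eq_swap⟩
      simp_rw [hsw]
      exact pairsum _ _ hgt _

/-- For every edge of an acyclic graph there is a `Bool` labelling of the vertices which
separates the endpoints of that edge and is constant on every other edge. -/
lemma key_graph {V : Type*} (G : SimpleGraph V) (hacyc : G.IsAcyclic)
    (i₀ j₀ : V) (hadj : G.Adj i₀ j₀) :
    ∃ S : V → Bool, S i₀ ≠ S j₀ ∧
      ∀ i j, G.Adj i j → s(i,j) ≠ s(i₀,j₀) → S i = S j := by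
  classical
  have hbridge : G.IsBridge s(i₀, j₀) :=
    (SimpleGraph.isAcyclic_iff_forall_edge_isBridge.1 hacyc) (by exact hadj)
  rw [SimpleGraph.isBridge_iff] at hbridge
  set G' := G \ SimpleGraph.fromEdgeSet {s(i₀, j₀)} with hG'
  refine ⟨fun w => decide (G'.Reachable i₀ w), ?_, ?_⟩
  · simp only [ne_eq, decide_eq_decide]
    intro h
    exact hbridge (h.1 (SimpleGraph.Reachable.refl i₀))
  · intro i j hij hne
    simp only [decide_eq_decide]
    have hadj' : G'.Adj i j := by
      rw [hG']
      simp only [SimpleGraph.sdiff_adj, SimpleGraph.fromEdgeSet_adj, Set.mem_singleton_iff]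
      exact ⟨hij, fun h => hne h.1⟩
    exact ⟨fun h => h.trans hadj'.reachable, fun h => h.trans hadj'.symm.reachable⟩

/-- combine a family of selectors into one with multiplicative sign character. -/
lemma xorsum {V : Type*} {ι : Type*} [DecidableEq ι] (s : Finset ι) (f : ι → V → Bool) :
    ∃ T : V → Bool, ∀ w, sg (T w) = ∏ i ∈ s, sg (f i w) := by
  classical
  induction s using Finset.induction_on with
  | empty => exact ⟨fun _ => false, fun w => by simp [sg]⟩
  | @insert a s ha ih =>
      obtain ⟨T, hT⟩ := ih
      refine ⟨fun w => xor (f a w) (T w), fun w => ?_⟩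
      rw [sg_xor, Finset.prod_insert ha, hT]

/-- abstract strict triangle inequality for ±1-signed sums. -/
lemma abs_signed_sum_lt {ι : Type*} (s : Finset ι) (f w : ι → ℝ)
    (hw : ∀ i ∈ s, w i = 1 ∨ w i = -1)
    (hf : (∀ i ∈ s, 0 < f i) ∨ (∀ i ∈ s, f i < 0))
    (h1 : ∃ i ∈ s, w i = 1) (h2 : ∃ i ∈ s, w i = -1) :
    |∑ i ∈ s, w i * f i| < |∑ i ∈ s, f i| := by
  have main : ∀ f : ι → ℝ, (∀ i ∈ s, 0 < f i) → |∑ i ∈ s, w i * f i| < |∑ i ∈ s, f i| := by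
    intro f hf
    have hupper : ∑ i ∈ s, w i * f i < ∑ i ∈ s, f i := by
      obtain ⟨i₀, hi₀, hwi₀⟩ := h2
      refine Finset.sum_lt_sum (fun i hi => ?_) ⟨i₀, hi₀, ?_⟩
      · rcases hw i hi with h | h <;> rw [h] <;> nlinarith [hf i hi]
      · rw [hwi₀]; nlinarith [hf i₀ hi₀]
    have hlower : -∑ i ∈ s, f i < ∑ i ∈ s, w i * f i := by
      rw [← Finset.sum_neg_distrib]
      obtain ⟨i₀, hi₀, hwi₀⟩ := h1
      refine Finset.sum_lt_sum (fun i hi => ?_) ⟨i₀, hi₀, ?_⟩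
      · rcases hw i hi with h | h <;> rw [h] <;> nlinarith [hf i hi]
      · rw [hwi₀]; nlinarith [hf i₀ hi₀]
    have hpos : 0 < ∑ i ∈ s, f i := by
      obtain ⟨i₀, hi₀, _⟩ := h1
      exact Finset.sum_pos hf ⟨i₀, hi₀⟩
    rw [abs_of_pos hpos, abs_lt]
    exact ⟨hlower, hupper⟩
  rcases hf with hf | hf
  · exact main f hf
  · have := main (fun i => - f i) (fun i hi => by simpa using hf i hi)
    simp only [mul_neg, Finset.sum_neg_distrib, abs_neg] at this
    convert this using 2

lemma endgame {m : ℕ} (hm : 2 ≤ m) (t : Fin m) (A : Fin m → ℝ) (hA : A t ≠ 0)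
    (H : ℝ → ℝ) (hodd : ∀ c, H (-c) = - H c) (hmono : StrictMono H) :
    |∑ ε ∈ (univ.filter fun ε : Fin m → Bool => (∏ s : Fin m, sg (ε s)) = 1),
        H (∑ s : Fin m, sg (ε s) * A s)|
      < |∑ ε ∈ (univ.filter fun ε : Fin m → Bool => ε t = false),
        H (∑ s : Fin m, sg (ε s) * A s)| := by
  classical
  set X : (Fin m → Bool) → ℝ := fun ε => ∑ s ∈ univ.erase t, sg (ε s) * A s with hX
  have hr : ∀ ε : Fin m → Bool, (∑ s : Fin m, sg (ε s) * A s) = sg (ε t) * A t + X ε :=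
    fun ε => (Finset.add_sum_erase univ (fun s => sg (ε s) * A s) (mem_univ t)).symm
  set k : (Fin m → Bool) → ℝ := fun ε => H (A t + X ε) + H (A t - X ε) with hk
  set J : (Fin m → Bool) → (Fin m → Bool) := fun ε s => if s = t then ε s else !(ε s) with hJ
  have hJJ : ∀ ε, J (J ε) = ε := by
    intro ε; funext s; by_cases h : s = t <;> simp [hJ, h]
  have hJt : ∀ ε, (J ε) t = ε t := by intro ε; simp [hJ]
  have hXJ : ∀ ε, X (J ε) = - X ε := by
    intro ε
    rw [hX]
    simp only
    rw [← Finset.sum_neg_distrib]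
    refine Finset.sum_congr rfl fun s hs => ?_
    rw [hJ]
    simp only [if_neg (Finset.mem_erase.1 hs).1]
    rw [sg_not]; ring
  have hXupd : ∀ ε b, X (Function.update ε t b) = X ε := by
    intro ε b
    refine Finset.sum_congr rfl fun s hs => ?_
    rw [Function.update_of_ne (Finset.mem_erase.1 hs).1]
  -- the `P1` sum
  set P1 : Finset (Fin m → Bool) := univ.filter fun ε => ε t = false with hP1
  set P2 : Finset (Fin m → Bool) := univ.filter fun ε => (∏ s : Fin m, sg (ε s)) = 1 with hP2
  have hJP1 : ∀ ε ∈ P1, J ε ∈ P1 := by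
    intro ε hε
    rw [hP1, mem_filter] at hε ⊢
    exact ⟨mem_univ _, (hJt ε).trans hε.2⟩
  have twoS1 : 2 * ∑ ε ∈ P1, H (∑ s : Fin m, sg (ε s) * A s) = ∑ ε ∈ P1, k ε := by
    have reind : ∑ ε ∈ P1, H (∑ s : Fin m, sg (ε s) * A s)
        = ∑ ε ∈ P1, H (∑ s : Fin m, sg ((J ε) s) * A s) :=
      Finset.sum_nbij' J J hJP1 hJP1 (fun ε _ => hJJ ε) (fun ε _ => hJJ ε)
        (fun ε hε => by rw [hJJ])
    calc 2 * ∑ ε ∈ P1, H (∑ s : Fin m, sg (ε s) * A s)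
        = ∑ ε ∈ P1, H (∑ s : Fin m, sg (ε s) * A s)
          + ∑ ε ∈ P1, H (∑ s : Fin m, sg ((J ε) s) * A s) := by rw [← reind]; ring
      _ = ∑ ε ∈ P1, k ε := by
          rw [← Finset.sum_add_distrib]
          refine Finset.sum_congr rfl fun ε hε => ?_
          rw [hP1, mem_filter] at hε
          rw [hr, hr, hJt, hXJ, hε.2]
          simp [sg, hk, sub_eq_add_neg]
  -- sign of k
  have hksign : (∀ ε ∈ P1, 0 < k ε) ∨ (∀ ε ∈ P1, k ε < 0) := by
    rcases lt_or_gt_of_ne hA with hneg | hpos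
    · refine Or.inr fun ε _ => ?_
      have : H (A t + X ε) < H (X ε - A t) := hmono (by linarith)
      have h2 : H (X ε - A t) = - H (A t - X ε) := by rw [← hodd]; ring_nf
      rw [hk]; simp only; linarith
    · refine Or.inl fun ε _ => ?_
      have : H (X ε - A t) < H (A t + X ε) := hmono (by linarith)
      have h2 : H (X ε - A t) = - H (A t - X ε) := by rw [← hodd]; ring_nf
      rw [hk]; simp only; linarith
  have hP1ne : (fun _ => false : Fin m → Bool) ∈ P1 := by simp [hP1]
  have hS1ne : ∑ ε ∈ P1, H (∑ s : Fin m, sg (ε s) * A s) ≠ 0 := by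
    intro h0
    rw [h0, mul_zero] at twoS1
    rcases hksign with hs | hs
    · exact absurd (Finset.sum_pos hs ⟨_, hP1ne⟩) (by rw [← twoS1]; simp)
    · have : ∑ ε ∈ P1, k ε < 0 := Finset.sum_neg hs ⟨_, hP1ne⟩
      rw [← twoS1] at this; exact absurd this (by simp)
  rcases Nat.even_or_odd m with hpar | hpar
  · -- m even : the `P2` sum vanishes
    have hNP2 : ∀ ε ∈ P2, (fun s => !(ε s)) ∈ P2 := by
      intro ε hε
      rw [hP2, mem_filter] at hε ⊢
      refine ⟨mem_univ _, ?_⟩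
      calc ∏ s : Fin m, sg (!(ε s)) = ∏ s : Fin m, (-1) * sg (ε s) :=
            Finset.prod_congr rfl fun s _ => by rw [sg_not]; ring
        _ = (-1)^m * ∏ s : Fin m, sg (ε s) := by
            rw [Finset.prod_mul_distrib, Finset.prod_const]
            simp
        _ = 1 := by rw [hpar.neg_one_pow, hε.2, one_mul]
    have hNr : ∀ ε : Fin m → Bool, (∑ s : Fin m, sg (!(ε s)) * A s)
        = - ∑ s : Fin m, sg (ε s) * A s := by
      intro ε
      rw [← Finset.sum_neg_distrib]
      exact Finset.sum_congr rfl fun s _ => by rw [sg_not]; ring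
    have hS2 : ∑ ε ∈ P2, H (∑ s : Fin m, sg (ε s) * A s) = 0 := by
      have reind : ∑ ε ∈ P2, H (∑ s : Fin m, sg (ε s) * A s)
          = ∑ ε ∈ P2, - H (∑ s : Fin m, sg (ε s) * A s) := by
        refine Finset.sum_nbij' (fun ε s => !(ε s)) (fun ε s => !(ε s)) hNP2 hNP2
          (fun ε _ => by funext s; simp) (fun ε _ => by funext s; simp)
          (fun ε hε => ?_)
        rw [hNr, hodd, neg_neg]
      rw [Finset.sum_neg_distrib] at reind
      linarith
    rw [hS2]
    simpa using hS1ne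
  · -- m odd
    have hcard_erase : (univ.erase t).card = m - 1 := by
      rw [Finset.card_erase_of_mem (mem_univ t)]
      simp
    have heven : Even ((univ.erase t).card) := by
      rw [hcard_erase]
      exact Nat.Odd.sub_odd hpar odd_one
    set w : (Fin m → Bool) → ℝ := fun ε => ∏ s ∈ univ.erase t, sg (ε s) with hw
    have hwupd : ∀ ε b, w (Function.update ε t b) = w ε := by
      intro ε b
      exact Finset.prod_congr rfl fun s hs => by
        rw [Function.update_of_ne (Finset.mem_erase.1 hs).1]
    have hsplit : ∀ ε : Fin m → Bool, (∏ s : Fin m, sg (ε s)) = sg (ε t) * w ε :=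
      fun ε => (Finset.mul_prod_erase univ (fun s => sg (ε s)) (mem_univ t)).symm
    have hwsg : ∀ ε ∈ P2, sg (ε t) = w ε := by
      intro ε hε
      rw [hP2, mem_filter] at hε
      have h1 := hε.2
      rw [hsplit] at h1
      have := congrArg (fun z => sg (ε t) * z) h1
      simp only [← mul_assoc, sg_sq, one_mul, mul_one] at this
      exact this.symm
    have hwvals : ∀ ε, w ε = 1 ∨ w ε = -1 := fun ε => prod_sg_vals _ _
    have hJP2 : ∀ ε ∈ P2, J ε ∈ P2 := by
      intro ε hε
      rw [hP2, mem_filter] at hε ⊢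
      refine ⟨mem_univ _, ?_⟩
      rw [hsplit, hJt]
      have : w (J ε) = w ε := by
        calc w (J ε) = ∏ s ∈ univ.erase t, (-1) * sg (ε s) := by
              refine Finset.prod_congr rfl fun s hs => ?_
              rw [hJ]
              simp only [if_neg (Finset.mem_erase.1 hs).1]
              rw [sg_not]; ring
          _ = (-1)^((univ.erase t).card) * w ε := by
              rw [Finset.prod_mul_distrib, Finset.prod_const, hw]
          _ = w ε := by rw [heven.neg_one_pow, one_mul]
      rw [this, ← hsplit]
      exact hε.2
    have twoS2 : 2 * ∑ ε ∈ P2, H (∑ s : Fin m, sg (ε s) * A s)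
        = ∑ ε ∈ P2, sg (ε t) * k ε := by
      have reind : ∑ ε ∈ P2, H (∑ s : Fin m, sg (ε s) * A s)
          = ∑ ε ∈ P2, H (∑ s : Fin m, sg ((J ε) s) * A s) :=
        Finset.sum_nbij' J J hJP2 hJP2 (fun ε _ => hJJ ε) (fun ε _ => hJJ ε)
          (fun ε hε => by rw [hJJ])
      calc 2 * ∑ ε ∈ P2, H (∑ s : Fin m, sg (ε s) * A s)
          = ∑ ε ∈ P2, H (∑ s : Fin m, sg (ε s) * A s)
            + ∑ ε ∈ P2, H (∑ s : Fin m, sg ((J ε) s) * A s) := by rw [← reind]; ring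
        _ = ∑ ε ∈ P2, sg (ε t) * k ε := by
            rw [← Finset.sum_add_distrib]
            refine Finset.sum_congr rfl fun ε hε => ?_
            rw [hr, hr, hJt, hXJ]
            cases hb : ε t
            · norm_num [sg, hk, sub_eq_add_neg]
            · norm_num [sg, hk]
              have e1 : H (-A t + X ε) = - H (A t - X ε) := by
                rw [← hodd]; ring_nf
              have e2 : H (-A t + - X ε) = - H (A t + X ε) := by
                rw [← hodd]; ring_nf
              rw [e1, e2]
    have transfer : ∑ ε ∈ P2, sg (ε t) * k ε = ∑ ε ∈ P1, w ε * k ε := by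
      refine Finset.sum_nbij' (fun ε => Function.update ε t false)
        (fun ε => Function.update ε t (decide (w ε = -1))) ?_ ?_ ?_ ?_ ?_
      · intro ε _
        rw [hP1, mem_filter]
        exact ⟨mem_univ _, Function.update_self _ _ _⟩
      · intro ε hε
        rw [hP2, mem_filter]
        refine ⟨mem_univ _, ?_⟩
        rw [hsplit]
        simp only [Function.update_self]
        rw [hwupd]
        rcases hwvals ε with h | h <;> rw [h] <;> norm_num [sg]
      · intro ε hε
        beta_reduce
        rw [Function.update_idem, hwupd]
        funext s
        by_cases hs : s = t
        · rw [hs, Function.update_self]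
          have h := hwsg ε hε
          cases hb : ε t
          · rw [hb] at h
            have h1 : w ε ≠ -1 := by rw [← h]; norm_num [sg]
            simp [h1]
          · rw [hb] at h
            have h1 : w ε = -1 := by rw [← h]; norm_num [sg]
            simp [h1]
        · rw [Function.update_of_ne hs]
      · intro ε hε
        rw [hP1, mem_filter] at hε
        beta_reduce
        rw [Function.update_idem, ← hε.2, Function.update_eq_self]
      · intro ε hε
        rw [hwupd, ← hwsg ε hε]
        congr 1
        rw [hk]
        simp only [hXupd]
    obtain ⟨s₀, hs₀⟩ : ∃ s₀ : Fin m, s₀ ≠ t := by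
      refine Fintype.exists_ne_of_one_lt_card ?_ t
      simp only [Fintype.card_fin]
      omega
    have h1 : ∃ ε ∈ P1, w ε = 1 := by
      refine ⟨fun _ => false, hP1ne, ?_⟩
      rw [hw]
      refine Finset.prod_eq_one fun s _ => rfl
    have h2 : ∃ ε ∈ P1, w ε = -1 := by
      refine ⟨fun s => decide (s = s₀), ?_, ?_⟩
      · rw [hP1, mem_filter]
        exact ⟨mem_univ _, decide_eq_false (Ne.symm hs₀)⟩
      · show (∏ s ∈ univ.erase t, sg ((fun s => decide (s = s₀)) s)) = -1
        beta_reduce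
        have : ∀ s, sg (decide (s = s₀)) = if s = s₀ then (-1 : ℝ) else 1 := by
          intro s; by_cases h : s = s₀ <;> simp [h, sg]
        rw [Finset.prod_congr rfl fun s _ => this s, Finset.prod_ite_eq']
        rw [if_pos (Finset.mem_erase.2 ⟨hs₀, mem_univ _⟩)]
    have final := abs_signed_sum_lt P1 k w (fun ε _ => hwvals ε) hksign h1 h2
    rw [← transfer, ← twoS2, ← twoS1] at final
    rw [abs_mul, abs_mul] at final
    norm_num at final
    exact final

lemma telescope {d m : ℕ} (p : Fin (m+1) → Fin d) (x : Fin d → Bool) :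
    ∏ s : Fin m, (pm (x (p s.castSucc)) * pm (x (p s.succ)))
      = pm (x (p 0)) * pm (x (p (Fin.last m))) := by
  induction m with
  | zero => simp [pm]; cases x (p 0) <;> norm_num [Fin.last]
  | succ m ih =>
      rw [Fin.prod_univ_castSucc]
      have hmid := ih (fun k => p k.castSucc)
      rw [Fin.castSucc_zero] at hmid
      have h1 : ∀ s : Fin m, (s.castSucc : Fin (m+1)).succ = (s.succ).castSucc :=
        fun s => (Fin.succ_castSucc s).symm
      have e1 : ∏ s : Fin m, (pm (x (p (s.castSucc).castSucc)) * pm (x (p (s.castSucc).succ)))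
          = pm (x (p 0)) * pm (x (p ((Fin.last m).castSucc))) := by
        rw [← hmid]
        refine Finset.prod_congr rfl fun s _ => ?_
        rw [h1 s]
      rw [e1, Fin.succ_last]
      have key : ∀ a b c : ℝ, b * b = 1 → (a * b) * (b * c) = a * c := by
        intros a b c h
        have : (a * b) * (b * c) = a * (b * b) * c := by ring
        rw [this, h, mul_one]
      exact key _ _ _ (by cases x (p ((Fin.last m).castSucc)) <;> norm_num [pm])

lemma cardeq {d : ℕ} (i j i' j' : Fin d) (hij : i ≠ j) (hij' : i' ≠ j') :
    (univ.filter fun x : Fin d → Bool => x i = true ∧ x j = true).card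
      = (univ.filter fun x : Fin d → Bool => x i' = true ∧ x j' = true).card := by
  classical
  obtain ⟨π, hπi, hπj⟩ : ∃ π : Equiv.Perm (Fin d), π i = i' ∧ π j = j' := by
    have hne1 : Equiv.swap i i' j ≠ i' :=
      fun h => hij ((Equiv.swap i i').injective (h.trans (Equiv.swap_apply_left i i').symm)).symm
    refine ⟨(Equiv.swap i i').trans (Equiv.swap (Equiv.swap i i' j) j'), ?_, ?_⟩
    · simp only [Equiv.trans_apply, Equiv.swap_apply_left]
      exact Equiv.swap_apply_of_ne_of_ne (Ne.symm hne1) hij'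
    · simp only [Equiv.trans_apply]
      exact Equiv.swap_apply_left _ _
  refine Finset.card_bij' (fun x _ => x ∘ π.symm) (fun y _ => y ∘ π) ?_ ?_ ?_ ?_
  · intro x hx
    rw [mem_filter] at hx ⊢
    refine ⟨mem_univ _, ?_, ?_⟩
    · show x (π.symm i') = true
      rw [← hπi, Equiv.symm_apply_apply]; exact hx.2.1
    · show x (π.symm j') = true
      rw [← hπj, Equiv.symm_apply_apply]; exact hx.2.2
  · intro y hy
    rw [mem_filter] at hy ⊢
    refine ⟨mem_univ _, ?_, ?_⟩
    · show y (π i) = true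
      rw [hπi]; exact hy.2.1
    · show y (π j) = true
      rw [hπj]; exact hy.2.2
  · intro x _; funext w; simp
  · intro y _; funext w; simp

lemma wgt_eq {d : ℕ} (β : Fin d → Fin d → ℝ) (i j : Fin d) (hij : i ≠ j) :
    wgt d β s(i,j) = |∑ x ∈ univ.filter (fun x : Fin d → Bool => x i = true ∧ x j = true),
        th (fld d β x)|
      / ((univ.filter fun x : Fin d → Bool => x i = true ∧ x j = true).card : ℝ) := by
  classical
  have hfil : (Finset.univ.filter (fun x : Fin d → Bool => ∀ v ∈ s(i,j), x v = true))
      = univ.filter (fun x : Fin d → Bool => x i = true ∧ x j = true) := by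
    ext x
    simp only [mem_filter, mem_univ, true_and, Sym2.mem_iff]
    constructor
    · intro h; exact ⟨h i (Or.inl rfl), h j (Or.inr rfl)⟩
    · rintro ⟨h1, h2⟩ v (rfl | rfl) <;> assumption
  set A := univ.filter (fun x : Fin d → Bool => x i = true ∧ x j = true) with hA
  have hpos : 0 < (A.card : ℝ) := by
    have : (fun _ => true : Fin d → Bool) ∈ A := by simp [hA]
    have hc : 0 < A.card := Finset.card_pos.2 ⟨_, this⟩
    exact_mod_cast hc
  rw [wgt, hfil]
  unfold condProbY
  have hsum : ∑ x ∈ A, sigmoid (1 * fld d β x) = ∑ x ∈ A, sigmoid (fld d β x) :=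
    Finset.sum_congr rfl fun x _ => by rw [one_mul]
  rw [hsum]
  have hth : ∑ x ∈ A, th (fld d β x) = 2 * (∑ x ∈ A, sigmoid (fld d β x)) - A.card := by
    unfold th
    rw [Finset.sum_sub_distrib, Finset.mul_sum]
    simp
  have hiden : 2 * ((∑ x ∈ A, sigmoid (fld d β x)) / (A.card : ℝ)) - 1
      = (2 * (∑ x ∈ A, sigmoid (fld d β x)) - A.card) / (A.card : ℝ) := by
    field_simp
  rw [hiden, hth, abs_div, abs_of_pos hpos]


/-- Proposition 4, Indirect influence: if the interaction graph is acyclic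
and `{i_1,i_2},…,{i_m,i_{m+1}}` is a path of length `m ≥ 2` in it, then
`w_{{i_1,i_{m+1}}} < w_{{i_s,i_{s+1}}}` for every `s ∈ {1,…,m}`. -/
theorem statement4 (d m : ℕ) (hd : 2 ≤ d) (hm : 2 ≤ m) (β : Fin d → Fin d → ℝ)
    (hsymm : ∀ i j, β i j = β j i)
    (hacyc : (interGraph d β).IsAcyclic)
    (p : Fin (m + 1) → Fin d) (hinj : Function.Injective p)
    (hedge : ∀ k : Fin m, β (p k.castSucc) (p k.succ) ≠ 0) :
    ∀ t : Fin m, wgt d β s(p 0, p (Fin.last m)) < wgt d β s(p t.castSucc, p t.succ) := by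
  classical
  intro t
  set G := interGraph d β with hG
  have hne_cs : ∀ s : Fin m, p s.castSucc ≠ p s.succ := fun s h =>
    absurd (hinj h) (Fin.castSucc_lt_succ (i := s)).ne
  have hadj : ∀ s : Fin m, G.Adj (p s.castSucc) (p s.succ) := by
    intro s
    rw [hG]
    exact ⟨hne_cs s, Or.inl (hedge s)⟩
  -- selectors for the path edges
  have hSp0 : ∀ s : Fin m, ∃ S : Fin d → Bool, S (p s.castSucc) ≠ S (p s.succ) ∧
      ∀ i j, G.Adj i j → s(i,j) ≠ s(p s.castSucc, p s.succ) → S i = S j :=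
    fun s => key_graph G hacyc _ _ (hadj s)
  choose Spath hSp1 hSp2 using hSp0
  -- the flip vector attached to a sign pattern
  have hVm0 : ∀ ε : Fin m → Bool, ∃ V : Fin d → Bool,
      ∀ w, sg (V w) = ∏ s ∈ univ.filter (fun s => ε s = true), sg (Spath s w) :=
    fun ε => xorsum _ _
  choose Vm hVm using hVm0
  have hVpath : ∀ (ε : Fin m → Bool) (s₀ : Fin m),
      sg (Vm ε (p s₀.castSucc)) * sg (Vm ε (p s₀.succ)) = sg (ε s₀) := by
    intro ε s₀
    rw [hVm, hVm, ← Finset.prod_mul_distrib]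
    have hfac : ∀ s ∈ univ.filter (fun s => ε s = true),
        sg (Spath s (p s₀.castSucc)) * sg (Spath s (p s₀.succ))
          = if s = s₀ then (-1:ℝ) else 1 := by
      intro s _
      by_cases h : s = s₀
      · subst h; rw [if_pos rfl]; exact sg_ne_eq _ _ (hSp1 s)
      · rw [if_neg h]
        refine sg_eq_eq _ _ (hSp2 s _ _ (hadj s₀) ?_)
        intro hE
        exact h (path_edges_distinct hinj s₀ s hE).symm
    rw [Finset.prod_congr rfl hfac, Finset.prod_ite_eq']
    by_cases h : ε s₀ = true
    · have hmem : s₀ ∈ univ.filter (fun s => ε s = true) := mem_filter.2 ⟨mem_univ _, h⟩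
      rw [if_pos hmem, h]; rfl
    · have hmem : s₀ ∉ univ.filter (fun s => ε s = true) :=
        fun hmem => h (mem_filter.1 hmem).2
      rw [if_neg hmem]
      have hf : ε s₀ = false := by simpa using h
      rw [hf]; rfl
  have hVnon : ∀ (ε : Fin m → Bool) (i j : Fin d), G.Adj i j →
      (∀ s : Fin m, s(i,j) ≠ s(p s.castSucc, p s.succ)) →
      sg (Vm ε i) * sg (Vm ε j) = 1 := by
    intro ε i j hij hnp
    rw [hVm, hVm, ← Finset.prod_mul_distrib]
    exact Finset.prod_eq_one fun s _ => sg_eq_eq _ _ (hSp2 s i j hij (hnp s))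
  -- abbreviations
  set A : Fin m → ℝ := fun s => β (p s.castSucc) (p s.succ) with hA
  set g0 : (Fin d → Bool) → ℝ := fun x => fld d β x - ∑ s : Fin m, A s with hg0
  set F : Finset (Fin d → Bool) :=
    univ.filter (fun x => ∀ s : Fin m, x (p s.castSucc) = x (p s.succ)) with hF
  set pat : (Fin d → Bool) → (Fin m → Bool) :=
    fun x s => xor (x (p s.castSucc)) (x (p s.succ)) with hpat
  have hFmem : ∀ x : Fin d → Bool, x ∈ F ↔ ∀ s : Fin m, x (p s.castSucc) = x (p s.succ) := by
    intro x; rw [hF, mem_filter]; simp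
  have hpatfalse : ∀ (x : Fin d → Bool) (s : Fin m),
      pat x s = false ↔ x (p s.castSucc) = x (p s.succ) := by
    intro x s
    rw [hpat]
    simp only
    cases x (p s.castSucc) <;> cases x (p s.succ) <;> simp
  -- fld after a pattern flip, on F
  have hfldV : ∀ (ε : Fin m → Bool) (x : Fin d → Bool), x ∈ F →
      fld d β (flipBy d (Vm ε) x) = g0 x + ∑ s : Fin m, sg (ε s) * A s := by
    intro ε x hx
    rw [master β hsymm p hinj (Vm ε) 1
      (fun i j hij hβ hnp => hVnon ε i j ⟨hij, Or.inl hβ⟩ hnp)]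
    have hq : ∀ s : Fin m, pm (x (p s.castSucc)) * pm (x (p s.succ)) = 1 :=
      fun s => (pm_mul_pm_eq_one_iff _ _).2 ((hFmem x).1 hx s)
    have hterm : ∀ s : Fin m, (sg (Vm ε (p s.castSucc)) * sg (Vm ε (p s.succ)) - 1)
          * β (p s.castSucc) (p s.succ) * (pm (x (p s.castSucc)) * pm (x (p s.succ)))
        = sg (ε s) * A s - A s := by
      intro s
      rw [hVpath, hq, hA]
      ring
    rw [Finset.sum_congr rfl (fun s _ => hterm s), Finset.sum_sub_distrib]
    rw [hg0]
    ring
  -- pattern of a flip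
  have hpatV : ∀ (ε : Fin m → Bool) (x : Fin d → Bool) (s : Fin m),
      pat (flipBy d (Vm ε) x) s = xor (ε s) (pat x s) := by
    intro ε x s
    have hxor : xor (Vm ε (p s.castSucc)) (Vm ε (p s.succ)) = ε s := by
      apply sg_inj
      rw [sg_xor]; exact hVpath ε s
    rw [hpat]
    simp only [flipBy]
    rw [← hxor]
    cases Vm ε (p s.castSucc) <;> cases Vm ε (p s.succ) <;>
      cases x (p s.castSucc) <;> cases x (p s.succ) <;> rfl
  have hflipF : ∀ (ε : Fin m → Bool) (x : Fin d → Bool), x ∈ F →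
      pat (flipBy d (Vm ε) x) = ε := by
    intro ε x hx; funext s
    rw [hpatV]
    have h0 : pat x s = false := (hpatfalse x s).2 ((hFmem x).1 hx s)
    rw [h0, Bool.xor_false]
  -- the grand reindexing
  have hgrand : ∀ c : (Fin m → Bool) → Prop,
      ∑ x ∈ univ.filter (fun x => c (pat x)), th (fld d β x)
        = ∑ ε ∈ univ.filter c, ∑ x ∈ F, th (g0 x + ∑ s : Fin m, sg (ε s) * A s) := by
    intro c
    rw [← Finset.sum_product']
    refine (Finset.sum_nbij'
      (i := fun q : (Fin m → Bool) × (Fin d → Bool) => flipBy d (Vm q.1) q.2)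
      (j := fun x => (pat x, flipBy d (Vm (pat x)) x)) ?_ ?_ ?_ ?_ ?_).symm
    · rintro ⟨ε, x⟩ hq
      rw [Finset.mem_product] at hq
      rw [mem_filter]
      refine ⟨mem_univ _, ?_⟩
      rw [hflipF ε x hq.2]
      exact (mem_filter.1 hq.1).2
    · intro x hx
      rw [mem_filter] at hx
      rw [Finset.mem_product, mem_filter]
      refine ⟨⟨mem_univ _, hx.2⟩, ?_⟩
      rw [hFmem]
      intro s
      rw [← hpatfalse, hpatV, Bool.xor_self]
    · rintro ⟨ε, x⟩ hq
      rw [Finset.mem_product] at hq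
      have h1 : pat (flipBy d (Vm ε) x) = ε := hflipF ε x hq.2
      simp only
      rw [h1, flipBy_flipBy]
    · intro x _
      simp only
      rw [flipBy_flipBy]
    · rintro ⟨ε, x⟩ hq
      rw [Finset.mem_product] at hq
      simp only
      rw [hfldV ε x hq.2]
  -- background edges and the sign-reversing flip
  set epath : Fin m → Sym2 (Fin d) := fun s => s(p s.castSucc, p s.succ) with hepath
  set bg : Finset (Sym2 (Fin d)) := G.edgeFinset \ Finset.image epath univ with hbg
  have hbgsel : ∀ e : Sym2 (Fin d), ∃ S : Fin d → Bool,
      e ∈ bg → ((∀ i j : Fin d, s(i,j) = e → S i ≠ S j)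
        ∧ (∀ i j : Fin d, G.Adj i j → s(i,j) ≠ e → S i = S j)) := by
    intro e
    by_cases he : e ∈ bg
    · induction e using Sym2.ind with
      | _ a b =>
        have hadj' : G.Adj a b := by
          rw [hbg] at he
          have h1 := (Finset.mem_sdiff.1 he).1
          rwa [SimpleGraph.mem_edgeFinset, SimpleGraph.mem_edgeSet] at h1
        obtain ⟨S, hS1, hS2⟩ := key_graph G hacyc a b hadj'
        refine ⟨S, fun _ => ⟨?_, hS2⟩⟩
        intro i j hij
        rw [Sym2.eq_iff] at hij
        rcases hij with ⟨rfl, rfl⟩ | ⟨rfl, rfl⟩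
        · exact hS1
        · exact hS1.symm
    · exact ⟨fun _ => false, fun h => absurd h he⟩
  choose Sbg hSbg using hbgsel
  obtain ⟨ρ, hρ⟩ := xorsum bg Sbg
  have hρchar : ∀ i j : Fin d, G.Adj i j →
      sg (ρ i) * sg (ρ j) = if s(i,j) ∈ bg then -1 else 1 := by
    intro i j hij
    rw [hρ, hρ, ← Finset.prod_mul_distrib]
    have hfac : ∀ e ∈ bg, sg (Sbg e i) * sg (Sbg e j)
        = if s(i,j) = e then (-1:ℝ) else 1 := by
      intro e he
      by_cases h : s(i,j) = e
      · rw [if_pos h]; exact sg_ne_eq _ _ ((hSbg e he).1 i j h)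
      · rw [if_neg h]; exact sg_eq_eq _ _ ((hSbg e he).2 i j hij h)
    rw [Finset.prod_congr rfl hfac, Finset.prod_ite_eq]
  have hρpath : ∀ s : Fin m, sg (ρ (p s.castSucc)) * sg (ρ (p s.succ)) = 1 := by
    intro s
    rw [hρchar _ _ (hadj s), if_neg]
    rw [hbg, Finset.mem_sdiff]
    rintro ⟨-, hnotim⟩
    exact hnotim (Finset.mem_image.2 ⟨s, mem_univ _, rfl⟩)
  have hρnon : ∀ i j : Fin d, i ≠ j → β i j ≠ 0 →
      (∀ s : Fin m, s(i,j) ≠ s(p s.castSucc, p s.succ)) →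
      sg (ρ i) * sg (ρ j) = (-1 : ℝ) := by
    intro i j hij hβ hnp
    have hij' : G.Adj i j := ⟨hij, Or.inl hβ⟩
    rw [hρchar i j hij', if_pos]
    rw [hbg, Finset.mem_sdiff]
    refine ⟨SimpleGraph.mem_edgeFinset.2 hij', ?_⟩
    intro hmem
    obtain ⟨s, -, hs⟩ := Finset.mem_image.1 hmem
    exact hnp s hs.symm
  have hfldρ : ∀ x : Fin d → Bool, x ∈ F →
      fld d β (flipBy d ρ x) = - fld d β x + 2 * ∑ s : Fin m, A s := by
    intro x hx
    rw [master β hsymm p hinj ρ (-1) hρnon]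
    have hq : ∀ s : Fin m, pm (x (p s.castSucc)) * pm (x (p s.succ)) = 1 :=
      fun s => (pm_mul_pm_eq_one_iff _ _).2 ((hFmem x).1 hx s)
    have hterm : ∀ s : Fin m, (sg (ρ (p s.castSucc)) * sg (ρ (p s.succ)) - (-1))
          * β (p s.castSucc) (p s.succ) * (pm (x (p s.castSucc)) * pm (x (p s.succ)))
        = 2 * A s := by
      intro s
      rw [hρpath, hq, hA]
      ring
    rw [Finset.sum_congr rfl (fun s _ => hterm s), Finset.mul_sum]
    ring
  have hρF : ∀ x : Fin d → Bool, x ∈ F → flipBy d ρ x ∈ F := by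
    intro x hx
    rw [hFmem]
    intro s
    have heq : ρ (p s.castSucc) = ρ (p s.succ) := sg_mul_eq_one _ _ (hρpath s)
    show xor (ρ (p s.castSucc)) (x (p s.castSucc)) = xor (ρ (p s.succ)) (x (p s.succ))
    rw [heq, (hFmem x).1 hx s]
  -- H and its properties
  set H : ℝ → ℝ := fun c => ∑ x ∈ F, th (g0 x + c) with hH
  have hFne : (fun _ => true : Fin d → Bool) ∈ F := by
    rw [hFmem]; intro s; rfl
  have hHmono : StrictMono H := by
    intro c1 c2 h
    exact Finset.sum_lt_sum_of_nonempty ⟨_, hFne⟩ fun x _ => th_strictMono (by linarith)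
  have hg0ρ : ∀ x : Fin d → Bool, x ∈ F → g0 (flipBy d ρ x) = - g0 x := by
    intro x hx
    rw [hg0]
    simp only
    rw [hfldρ x hx]
    ring
  have hHodd : ∀ c : ℝ, H (-c) = - H c := by
    intro c
    rw [hH]
    simp only
    have reind : ∑ x ∈ F, th (g0 (flipBy d ρ x) + -c) = ∑ x ∈ F, th (g0 x + -c) :=
      Finset.sum_nbij' (fun x => flipBy d ρ x) (fun x => flipBy d ρ x)
        hρF hρF (fun x _ => flipBy_flipBy d ρ x) (fun x _ => flipBy_flipBy d ρ x)
        (fun x _ => rfl)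
    rw [← reind]
    rw [← Finset.sum_neg_distrib]
    refine Finset.sum_congr rfl fun x hx => ?_
    rw [hg0ρ x hx]
    rw [show - g0 x + -c = -(g0 x + c) by ring, th_odd]
  -- the global negation preserves fld
  have hflip1 : ∀ x : Fin d → Bool, fld d β (flipBy d (fun _ => true) x) = fld d β x := by
    intro x
    rw [master β hsymm p hinj (fun _ => true) 1 (fun i j _ _ _ => by norm_num [sg])]
    have hterm : ∀ s : Fin m, (sg true * sg true - 1) * β (p s.castSucc) (p s.succ)
        * (pm (x (p s.castSucc)) * pm (x (p s.succ))) = 0 := by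
      intro s; norm_num [sg]
    rw [Finset.sum_congr rfl fun s _ => hterm s]
    simp
  have halves : ∀ u v : Fin d,
      2 * ∑ x ∈ univ.filter (fun x : Fin d → Bool => x u = true ∧ x v = true), th (fld d β x)
        = ∑ x ∈ univ.filter (fun x : Fin d → Bool => x u = x v), th (fld d β x) := by
    intro u v
    have hsplit : univ.filter (fun x : Fin d → Bool => x u = x v)
        = (univ.filter fun x : Fin d → Bool => x u = true ∧ x v = true)
          ∪ (univ.filter fun x : Fin d → Bool => x u = false ∧ x v = false) := by
      ext x
      simp only [mem_filter, mem_univ, true_and, mem_union]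
      cases hx : x u <;> cases hy : x v <;> simp
    have hdisj : Disjoint (univ.filter fun x : Fin d → Bool => x u = true ∧ x v = true)
        (univ.filter fun x : Fin d → Bool => x u = false ∧ x v = false) := by
      rw [Finset.disjoint_left]
      intro x hx hx'
      rw [mem_filter] at hx hx'
      rw [hx.2.1] at hx'
      exact absurd hx'.2.1 (by simp)
    have hbij : ∑ x ∈ (univ.filter fun x : Fin d → Bool => x u = false ∧ x v = false),
        th (fld d β x)
        = ∑ x ∈ (univ.filter fun x : Fin d → Bool => x u = true ∧ x v = true),
          th (fld d β x) := by
      refine Finset.sum_nbij' (fun x => flipBy d (fun _ => true) x)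
        (fun x => flipBy d (fun _ => true) x) ?_ ?_
        (fun x _ => flipBy_flipBy _ _ x) (fun x _ => flipBy_flipBy _ _ x) ?_
      · intro x hx
        rw [mem_filter] at hx ⊢
        refine ⟨mem_univ _, ?_, ?_⟩
        · show xor true (x u) = true
          rw [hx.2.1]; rfl
        · show xor true (x v) = true
          rw [hx.2.2]; rfl
      · intro x hx
        rw [mem_filter] at hx ⊢
        refine ⟨mem_univ _, ?_, ?_⟩
        · show xor true (x u) = false
          rw [hx.2.1]; rfl
        · show xor true (x v) = false
          rw [hx.2.2]; rfl
      · intro x _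
        rw [hflip1]
    rw [hsplit, Finset.sum_union hdisj, ← hbij]
    ring
  -- identification of the two conditioned sums
  have e_t : 2 * ∑ x ∈ univ.filter
        (fun x : Fin d → Bool => x (p t.castSucc) = true ∧ x (p t.succ) = true),
        th (fld d β x)
      = ∑ ε ∈ univ.filter (fun ε : Fin m → Bool => ε t = false),
          H (∑ s : Fin m, sg (ε s) * A s) := by
    rw [halves (p t.castSucc) (p t.succ)]
    refine Eq.trans ?_ ((hgrand (fun ε : Fin m → Bool => ε t = false)).trans ?_)
    · refine Finset.sum_congr ?_ (fun x _ => rfl)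
      ext x
      simp only [mem_filter, mem_univ, true_and]
      exact (hpatfalse x t).symm
    · refine Finset.sum_congr ?_ (fun ε _ => rfl)
      ext ε
      simp only [mem_filter, mem_univ, true_and]
  have e_end : 2 * ∑ x ∈ univ.filter
        (fun x : Fin d → Bool => x (p 0) = true ∧ x (p (Fin.last m)) = true),
        th (fld d β x)
      = ∑ ε ∈ univ.filter (fun ε : Fin m → Bool => (∏ s : Fin m, sg (ε s)) = 1),
          H (∑ s : Fin m, sg (ε s) * A s) := by
    rw [halves (p 0) (p (Fin.last m))]
    refine Eq.trans ?_ ((hgrand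
      (fun ε : Fin m → Bool => (∏ s : Fin m, sg (ε s)) = 1)).trans ?_)
    · refine Finset.sum_congr ?_ (fun x _ => rfl)
      ext x
      simp only [mem_filter, mem_univ, true_and]
      have htel : (∏ s : Fin m, sg (pat x s)) = pm (x (p 0)) * pm (x (p (Fin.last m))) := by
        rw [Finset.prod_congr rfl (fun s (_ : s ∈ univ) => ?_), telescope p x]
        rw [hpat]
        exact (pm_eq_sg_xor _ _).symm
      show x (p 0) = x (p (Fin.last m)) ↔ (∏ s : Fin m, sg (pat x s)) = 1
      rw [htel]
      exact (pm_mul_pm_eq_one_iff _ _).symm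
    · refine Finset.sum_congr ?_ (fun ε _ => rfl)
      ext ε
      simp only [mem_filter, mem_univ, true_and]
  -- the core inequality
  have key := endgame hm t A (by rw [hA]; exact hedge t) H hHodd hHmono
  have habs : |∑ x ∈ univ.filter
        (fun x : Fin d → Bool => x (p 0) = true ∧ x (p (Fin.last m)) = true),
        th (fld d β x)|
      < |∑ x ∈ univ.filter
        (fun x : Fin d → Bool => x (p t.castSucc) = true ∧ x (p t.succ) = true),
        th (fld d β x)| := by
    have h2 : |(2:ℝ) * ∑ x ∈ univ.filter
          (fun x : Fin d → Bool => x (p 0) = true ∧ x (p (Fin.last m)) = true),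
          th (fld d β x)|
        < |(2:ℝ) * ∑ x ∈ univ.filter
          (fun x : Fin d → Bool => x (p t.castSucc) = true ∧ x (p t.succ) = true),
          th (fld d β x)| := by
      rw [e_t, e_end]
      exact key
    rw [abs_mul, abs_mul] at h2
    norm_num at h2
    exact h2
  -- final assembly
  have hab : p 0 ≠ p (Fin.last m) := by
    intro h
    have h0 := congrArg Fin.val (hinj h)
    simp only [Fin.val_zero, Fin.val_last] at h0
    omega
  rw [wgt_eq β (p 0) (p (Fin.last m)) hab, wgt_eq β (p t.castSucc) (p t.succ) (hne_cs t)]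
  rw [cardeq (p 0) (p (Fin.last m)) (p t.castSucc) (p t.succ) hab (hne_cs t)]
  have hcpos : 0 < ((univ.filter fun x : Fin d → Bool =>
      x (p t.castSucc) = true ∧ x (p t.succ) = true).card : ℝ) := by
    have hmem : (fun _ => true : Fin d → Bool) ∈ univ.filter
        (fun x : Fin d → Bool => x (p t.castSucc) = true ∧ x (p t.succ) = true) := by
      simp
    exact_mod_cast Finset.card_pos.2 ⟨_, hmem⟩
  exact div_lt_div_of_pos_right habs hcpos
end

section
/- Assume the interaction graph G = (V, I) is acyclic. Then for every i ∈ V, Pr(x_i = +1, y = +1) = 1/4; equivalently, Pr(y = +1 | x_i = +1) = 1/2. -/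
open Finset

/-- Auxiliary: sigmoid of a negative. -/
lemma sigmoid_neg (t : ℝ) : sigmoid (-t) = 1 - sigmoid t := by
  unfold sigmoid
  have h : Real.exp t > 0 := Real.exp_pos t
  rw [Real.exp_neg]
  field_simp
  ring

/-- Auxiliary: pm of xor. -/
lemma pm_xor_s12 (p q : Bool) : pm (xor p q) = -(pm p * pm q) := by
  cases p <;> cases q <;> simp [pm]

/-- Auxiliary: an acyclic graph admits a proper 2-coloring. -/
lemma exists_proper_coloring {V : Type*} [Fintype V] [DecidableEq V]
    (G : SimpleGraph V) (h : G.IsAcyclic) :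
    ∃ c : V → Bool, ∀ a b, G.Adj a b → c a ≠ c b := by
  classical
  generalize hn : G.edgeSet.ncard = n
  induction n using Nat.strong_induction_on generalizing G with
  | _ n IH =>
    rcases Nat.eq_zero_or_pos n with h0 | hpos
    · refine ⟨fun _ => true, fun a b hab => ?_⟩
      have hmem : s(a, b) ∈ G.edgeSet := hab
      have : G.edgeSet = ∅ := by
        have := hn
        rw [h0] at this
        exact (Set.ncard_eq_zero G.edgeSet.toFinite).mp this
      simp [this] at hmem
    · have hne : G.edgeSet.Nonempty := by
        rw [Set.nonempty_iff_ne_empty]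
        intro he
        rw [he, Set.ncard_empty] at hn
        omega
      obtain ⟨e, he⟩ := hne
      induction e using Sym2.ind with
      | _ a b =>
        have hab : G.Adj a b := G.mem_edgeSet.mp he
        set G' := G \ SimpleGraph.fromEdgeSet {s(a, b)} with hG'
        have hle : G' ≤ G := sdiff_le
        have hacyc' : G'.IsAcyclic := fun v c hc => h (c.mapLe hle) (hc.mapLe hle)
        have hGadj' : ¬ G'.Adj a b := by
          simp [hG', SimpleGraph.sdiff_adj, SimpleGraph.fromEdgeSet_adj, hab, hab.ne]
        have hss : G'.edgeSet ⊂ G.edgeSet := by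
          refine ⟨SimpleGraph.edgeSet_mono hle, fun hsub => hGadj' ?_⟩
          exact G'.mem_edgeSet.mp (hsub he)
        have hlt : G'.edgeSet.ncard < n := by
          rw [← hn]
          exact Set.ncard_lt_ncard hss G.edgeSet.toFinite
        obtain ⟨c', hc'⟩ := IH _ hlt G' hacyc' rfl
        -- every edge of an acyclic graph is a bridge
        have hbridge := (SimpleGraph.isAcyclic_iff_forall_adj_isBridge.mp h) hab
        rw [SimpleGraph.isBridge_iff] at hbridge
        have hnr : ¬ G'.Reachable a b := hbridge
        refine ⟨fun v => if G'.Reachable b v then xor (c' v) (c' a == c' b) else c' v,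
          fun u v huv => ?_⟩
        by_cases hedge : s(u, v) = s(a, b)
        · have hba : ¬ G'.Reachable b a := fun hr => hnr hr.symm
          have hbb : G'.Reachable b b := SimpleGraph.Reachable.refl b
          rw [Sym2.eq_iff] at hedge
          rcases hedge with ⟨hu, hv⟩ | ⟨hu, hv⟩ <;> subst hu <;> subst hv <;>
            simp only [hba, hbb, if_true, if_false] <;>
            (cases hx : c' u <;> cases hy : c' v <;> simp [hx, hy])
        · have huv' : G'.Adj u v := by
            rw [hG', SimpleGraph.sdiff_adj, SimpleGraph.fromEdgeSet_adj]
            exact ⟨huv, fun hc => hedge (by simpa using hc.1)⟩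
          have hcuv : c' u ≠ c' v := hc' u v huv'
          have hiff : G'.Reachable b u ↔ G'.Reachable b v :=
            ⟨fun hr => hr.trans huv'.reachable, fun hr => hr.trans huv'.symm.reachable⟩
          by_cases hr : G'.Reachable b u
          · have hrv : G'.Reachable b v := hiff.mp hr
            simp only [hr, hrv, if_true]
            cases hk : (c' a == c' b) <;>
              cases hcu : c' u <;> cases hcv : c' v <;> simp_all
          · have hrv : ¬ G'.Reachable b v := fun hh => hr (hiff.mpr hh)
            simp only [hr, hrv, if_false]
            exact hcuv

/-- Lemma 1: if the interaction graph is acyclic, then for every `i ∈ V`,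
`Pr(x_i = +1, y = +1) = 1/4`; equivalently, `Pr(y = +1 | x_i = +1) = 1/2`. -/
theorem statement12 (d : ℕ) (hd : 2 ≤ d) (β : Fin d → Fin d → ℝ)
    (hsymm : ∀ i j, β i j = β j i)
    (hacyc : (interGraph d β).IsAcyclic) (i : Fin d) :
    (∑ x ∈ Finset.univ.filter (fun x : Fin d → Bool => x i = true),
        sigmoid (fld d β x)) / 2 ^ d = 1 / 4 ∧
    condProbY d β 1 (Finset.univ.filter (fun x : Fin d → Bool => x i = true)) = 1 / 2 := by
  classical
  obtain ⟨c', hc'⟩ := exists_proper_coloring (interGraph d β) hacyc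
  -- normalized coloring with value `false` at `i`
  set S : Fin d → Bool := fun v => xor (c' v) (c' i) with hSdef
  have hSi : S i = false := by simp [hSdef]
  have hS : ∀ a b, a ≠ b → β a b ≠ 0 → S a ≠ S b := by
    intro a b hne hβ
    have hadj : (interGraph d β).Adj a b := by
      simp only [interGraph, SimpleGraph.fromRel_adj]
      exact ⟨hne, Or.inl hβ⟩
    have := hc' a b hadj
    simp only [hSdef]
    cases hk : c' i <;> cases hca : c' a <;> cases hcb : c' b <;> simp_all
  -- the flipping involution
  set flipS : (Fin d → Bool) → (Fin d → Bool) := fun x v => xor (x v) (S v) with hflipdef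
  have hflipflip : ∀ x, flipS (flipS x) = x := by
    intro x; funext v; simp [hflipdef]
  have hfld : ∀ x, fld d β (flipS x) = - fld d β x := by
    intro x
    unfold fld
    rw [← Finset.sum_neg_distrib]
    refine Finset.sum_congr rfl fun a _ => ?_
    rw [← Finset.sum_neg_distrib]
    refine Finset.sum_congr rfl fun b hb => ?_
    have hab : a < b := Finset.mem_Ioi.mp hb
    by_cases hβ : β a b = 0
    · simp [hβ]
    · have hSab : S a ≠ S b := hS a b hab.ne hβ
      have h1 : pm (S a) * pm (S b) = -1 := by
        generalize S a = p at hSab ⊢; generalize S b = q at hSab ⊢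
        cases p <;> cases q <;> simp_all [pm]
      have hpmf : ∀ (y : Fin d → Bool) (v : Fin d),
          pm (flipS y v) = -(pm (y v) * pm (S v)) := fun y v => pm_xor_s12 (y v) (S v)
      calc β a b * pm (flipS x a) * pm (flipS x b)
          = β a b * (-(pm (x a) * pm (S a))) * (-(pm (x b) * pm (S b))) := by
            rw [hpmf, hpmf]
        _ = β a b * pm (x a) * pm (x b) * (pm (S a) * pm (S b)) := by ring
        _ = -(β a b * pm (x a) * pm (x b)) := by rw [h1]; ring
  set A : Finset (Fin d → Bool) :=
    Finset.univ.filter (fun x : Fin d → Bool => x i = true) with hAdef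
  have hmemA : ∀ x, x ∈ A ↔ x i = true := by
    intro x; simp [hAdef]
  have hflipA : ∀ x, x ∈ A ↔ flipS x ∈ A := by
    intro x
    rw [hmemA, hmemA]
    simp [hflipdef, hSi]
  -- the pairing identity
  set T : ℝ := ∑ x ∈ A, sigmoid (fld d β x) with hTdef
  let e : (Fin d → Bool) ≃ (Fin d → Bool) :=
    ⟨flipS, flipS, fun x => hflipflip x, fun x => hflipflip x⟩
  have hsum : T = ∑ x ∈ A, (1 - sigmoid (fld d β x)) := by
    rw [hTdef]
    refine Finset.sum_equiv e (fun x => ?_) (fun x hx => ?_)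
    · exact hflipA x
    · rw [show e x = flipS x from rfl, hfld, sigmoid_neg]
      ring
  have hT : 2 * T = A.card := by
    rw [Finset.sum_sub_distrib, Finset.sum_const, nsmul_eq_mul, mul_one, ← hTdef] at hsum
    linarith
  -- cardinality of A
  have hcard : 2 * A.card = 2 ^ d := by
    have hbij : A.card = (Finset.univ.filter
        (fun x : Fin d → Bool => ¬ x i = true)).card := by
      refine Finset.card_bij' (fun x _ => Function.update x i (!(x i)))
        (fun x _ => Function.update x i (!(x i))) ?_ ?_ ?_ ?_
      · intro x hx
        rw [hmemA] at hx
        simp [Function.update, hx]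
      · intro x hx
        simp only [Finset.mem_filter, Finset.mem_univ, true_and] at hx
        rw [hmemA]
        simp only [Function.update_self]
        cases hxi : x i
        · rfl
        · exact absurd hxi hx
      · intro x hx
        funext v
        by_cases hv : v = i
        · subst hv; simp
        · simp [Function.update, hv]
      · intro x hx
        funext v
        by_cases hv : v = i
        · subst hv; simp
        · simp [Function.update, hv]
    have hpart : A.card + (Finset.univ.filter
        (fun x : Fin d → Bool => ¬ x i = true)).card = 2 ^ d := by
      rw [hAdef, Finset.card_filter_add_card_filter_not]
      simp [Finset.card_univ]
    rw [two_mul]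
    nth_rewrite 2 [hbij]
    exact hpart
  have hcardR : (A.card : ℝ) = 2 ^ d / 2 := by
    have : (2 : ℝ) * A.card = 2 ^ d := by exact_mod_cast hcard
    linarith
  have h2d : (2 : ℝ) ^ d ≠ 0 := by positivity
  have hTval : T = 2 ^ d / 4 := by
    have : (2 : ℝ) * T = 2 ^ d / 2 := by rw [hT, hcardR]
    linarith
  constructor
  · rw [hTval]
    field_simp
  · unfold condProbY
    simp only [one_mul]
    rw [← hTdef, hTval, hcardR]
    have h2 : (2 : ℝ) ^ d / 2 ≠ 0 := by positivity
    field_simp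
    ring
end
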